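/- arXiv:1211.0152 — 2 statements merged into one kernel-verified Lean document; each statement's English description precedes it below -/
import Mathlib

section
/- Let F be a probability measure on ℝ with mean μ and central moments μ_k = E[(X−μ)^k]. For r ≥ 1, the first von Mises derivative (influence function) of the functional F ↦ μ_r(F) at the point x₁ is μ_{r·1}(x₁) = h₁^r − μ_r − r·h₁·μ_{r−1}, where h₁ = x₁ − μ. That is, with G_ε = (1−ε)F + εδ_{x₁}, one has d/dε μ_r(G_ε)|_{ε=0⁺} = (x₁−μ)^r − μ_r − r(x₁−μ)μ_{r−1}. -/
open MeasureTheory Filter Topology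

/-- The mean of a measure on `ℝ`. -/
noncomputable def m1 (G : MeasureTheory.Measure ℝ) : ℝ := ∫ x, x ∂G

/-- The `k`-th central moment of a measure on `ℝ` about its own mean. -/
noncomputable def cm (G : MeasureTheory.Measure ℝ) (k : ℕ) : ℝ :=
  ∫ x, (x - m1 G) ^ k ∂G

/-- The contaminated measure `(1-ε)F + ε δ_y`. -/
noncomputable def mix (F : MeasureTheory.Measure ℝ) (y : ℝ) (ε : ℝ) :
    MeasureTheory.Measure ℝ :=
  ENNReal.ofReal (1 - ε) • F + ENNReal.ofReal ε • MeasureTheory.Measure.dirac y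

lemma integrable_dirac' {f : ℝ → ℝ} (hf : Measurable f) (y : ℝ) :
    Integrable f (MeasureTheory.Measure.dirac y) := by
  refine ⟨hf.aestronglyMeasurable, ?_⟩
  show (∫⁻ a, (‖f a‖₊ : ENNReal) ∂MeasureTheory.Measure.dirac y) < ⊤
  rw [MeasureTheory.lintegral_dirac' _ (by exact hf.nnnorm.coe_nnreal_ennreal)]
  exact ENNReal.coe_lt_top

lemma integral_mix (F : MeasureTheory.Measure ℝ) [IsProbabilityMeasure F] (y ε : ℝ)
    (hε : 0 ≤ ε) (hε1 : ε ≤ 1) (f : ℝ → ℝ) (hf : Integrable f F) (hfm : Measurable f) :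
    ∫ x, f x ∂(mix F y ε) = (1 - ε) * ∫ x, f x ∂F + ε * f y := by
  rw [mix, integral_add_measure, integral_smul_measure, integral_smul_measure,
    integral_dirac, ENNReal.toReal_ofReal (by linarith), ENNReal.toReal_ofReal hε]
  · simp only [smul_eq_mul]; try ring
  · exact hf.smul_measure ENNReal.ofReal_ne_top
  · exact (integrable_dirac' hfm y).smul_measure ENNReal.ofReal_ne_top

lemma integrable_pow_sub (F : MeasureTheory.Measure ℝ) [IsProbabilityMeasure F]
    (r : ℕ) (hint : ∀ k ≤ r, Integrable (fun x : ℝ => x ^ k) F)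
    (c : ℝ) (j : ℕ) (hj : j ≤ r) :
    Integrable (fun x : ℝ => (x - c) ^ j) F := by
  have : (fun x : ℝ => (x - c) ^ j)
      = fun x : ℝ => ∑ i ∈ Finset.range (j + 1), x ^ i * ((-c) ^ (j - i) * (j.choose i : ℝ)) := by
    funext x
    rw [sub_eq_add_neg, add_pow]
    exact Finset.sum_congr rfl fun i _ => by ring
  rw [this]
  exact integrable_finset_sum _ fun i hi =>
    (hint i (le_trans (Nat.lt_succ_iff.mp (Finset.mem_range.mp hi)) hj)).mul_const _

/-- The influence function of the `r`-th central moment functional: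
`d/dε μ_r((1−ε)F + εδ_{x₁}) |_{ε=0⁺} = h₁^r − μ_r − r h₁ μ_{r−1}` with `h₁ = x₁ − μ`. -/
theorem influence_function_of_central_moment
    (F : MeasureTheory.Measure ℝ) [IsProbabilityMeasure F]
    (r : ℕ) (hr : 1 ≤ r)
    (hint : ∀ k ≤ r, Integrable (fun x : ℝ => x ^ k) F) (x₁ : ℝ) :
    Tendsto (fun ε : ℝ => (cm (mix F x₁ ε) r - cm F r) / ε)
      (𝓝[>] 0)
      (𝓝 ((x₁ - m1 F) ^ r - cm F r - r * (x₁ - m1 F) * cm F (r - 1))) := by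
  set μ := m1 F with hμ
  set h : ℝ := x₁ - μ with hh
  -- the polynomial function in ε
  set g : ℝ → ℝ := fun ε =>
    (1 - ε) * (∑ j ∈ Finset.range (r + 1),
        (∫ x, (x - μ) ^ j ∂F) * ((-h) * ε) ^ (r - j) * (r.choose j : ℝ))
      + ε * ((1 - ε) * h) ^ r with hg
  -- value of g at 0
  have hsum0 : ∀ ε₀ : ℝ, ε₀ = 0 → (∑ j ∈ Finset.range (r + 1),
      (∫ x, (x - μ) ^ j ∂F) * ((-h) * ε₀) ^ (r - j) * (r.choose j : ℝ)) = cm F r := by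
    intro ε₀ hε₀
    subst hε₀
    rw [Finset.sum_eq_single r]
    · simp [cm, hμ]
    · intro j hj hjr
      have : r - j ≠ 0 := Nat.sub_ne_zero_of_lt
        (lt_of_le_of_ne (Nat.lt_succ_iff.mp (Finset.mem_range.mp hj)) hjr)
      simp [zero_pow this]
    · intro hrr; exact absurd (Finset.self_mem_range_succ r) hrr
  have hg0 : g 0 = cm F r := by
    rw [hg]; simp only [zero_mul, add_zero, one_mul, sub_zero]
    rw [hsum0 0 rfl]
  -- g agrees with the quantity of interest for ε ∈ (0,1)
  have heq : ∀ ε : ℝ, ε ∈ Set.Ioo (0:ℝ) 1 → cm (mix F x₁ ε) r = g ε := by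
    intro ε hε
    obtain ⟨hε0, hε1⟩ := hε
    have hε0' : (0:ℝ) ≤ ε := le_of_lt hε0
    have hε1' : ε ≤ 1 := le_of_lt hε1
    -- the mean of the mixture
    have hm : m1 (mix F x₁ ε) = (1 - ε) * μ + ε * x₁ := by
      have := integral_mix F x₁ ε hε0' hε1' (fun x => x)
        (by simpa using hint 1 hr) measurable_id
      simpa [m1, hμ] using this
    set m : ℝ := (1 - ε) * μ + ε * x₁ with hmdef
    have hint' : Integrable (fun x : ℝ => (x - m) ^ r) F :=
      integrable_pow_sub F r hint m r le_rfl
    have hmeas : Measurable (fun x : ℝ => (x - m) ^ r) :=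
      (measurable_id.sub measurable_const).pow_const r
    have key : cm (mix F x₁ ε) r
        = (1 - ε) * (∫ x, (x - m) ^ r ∂F) + ε * (x₁ - m) ^ r := by
      rw [cm, hm]
      exact integral_mix F x₁ ε hε0' hε1' _ hint' hmeas
    -- expand the integral over F
    have hexp : (∫ x, (x - m) ^ r ∂F)
        = ∑ j ∈ Finset.range (r + 1),
            (∫ x, (x - μ) ^ j ∂F) * ((-h) * ε) ^ (r - j) * (r.choose j : ℝ) := by
      have h1 : ∀ x : ℝ, (x - m) ^ r
          = ∑ j ∈ Finset.range (r + 1),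
              (x - μ) ^ j * (((-h) * ε) ^ (r - j) * (r.choose j : ℝ)) := by
        intro x
        have : x - m = (x - μ) + (-h) * ε := by rw [hmdef, hh]; ring
        rw [this, add_pow]
        exact Finset.sum_congr rfl fun j _ => by ring
      rw [integral_congr_ae (Filter.Eventually.of_forall h1)]
      rw [integral_finset_sum _ fun j hj =>
        (integrable_pow_sub F r hint μ j (Nat.lt_succ_iff.mp (Finset.mem_range.mp hj))).mul_const _]
      exact Finset.sum_congr rfl fun j _ => by rw [integral_mul_const]; ring
    have hx1m : x₁ - m = (1 - ε) * h := by rw [hmdef, hh]; ring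
    rw [key, hexp, hx1m, hg]
  -- derivative of g at 0
  have hS : HasDerivAt (fun ε : ℝ => ∑ j ∈ Finset.range (r + 1),
      (∫ x, (x - μ) ^ j ∂F) * ((-h) * ε) ^ (r - j) * (r.choose j : ℝ))
      (-(r : ℝ) * h * cm F (r - 1)) 0 := by
    have hterm : ∀ j ∈ Finset.range (r + 1), HasDerivAt (fun ε : ℝ =>
        (∫ x, (x - μ) ^ j ∂F) * ((-h) * ε) ^ (r - j) * (r.choose j : ℝ))
        ((∫ x, (x - μ) ^ j ∂F) * (((r - j : ℕ) : ℝ) * ((-h) * 0) ^ (r - j - 1) * (-h))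
          * (r.choose j : ℝ)) 0 := by
      intro j _
      exact ((((hasDerivAt_id (0:ℝ)).const_mul (-h)).pow (r - j)).const_mul _).mul_const _
        |>.congr_deriv (by simp only [id_eq, mul_one])
    have := HasDerivAt.fun_sum hterm
    refine this.congr_deriv (Eq.symm ?_)
    rw [Finset.sum_eq_single (r - 1)]
    · have h1 : r - (r - 1) = 1 := by omega
      have h3 : (r.choose (r - 1) : ℝ) = r := by
        have := Nat.choose_symm (Nat.sub_le r 1)
        rw [show r - (r - 1) = 1 by omega, Nat.choose_one_right] at this
        rw [← this]
      rw [h1, h3]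
      have : cm F (r - 1) = ∫ x, (x - μ) ^ (r - 1) ∂F := by rw [cm, hμ]
      rw [this]
      norm_num
      ring
    · intro j hj hjne
      have hj' : j ≤ r := Nat.lt_succ_iff.mp (Finset.mem_range.mp hj)
      by_cases hjr : j = r
      · subst hjr; simp
      · have hne : r - j - 1 ≠ 0 := by omega
        simp [zero_pow hne]
    · intro habs
      exact absurd (Finset.mem_range.mpr (by omega)) habs
  -- derivative of the full function g at 0
  have hA : HasDerivAt (fun ε : ℝ => 1 - ε) (-1) 0 := by
    simpa using (hasDerivAt_id (0:ℝ)).const_sub 1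
  have hB := hA.mul hS
  have hC : HasDerivAt (fun ε : ℝ => ((1 - ε) * h) ^ r)
      ((r : ℝ) * ((1 - (0:ℝ)) * h) ^ (r - 1) * (-1 * h)) 0 :=
    (hA.mul_const h).pow r
  have hD := (hasDerivAt_id (0:ℝ)).mul hC
  have hgderiv : HasDerivAt g (h ^ r - cm F r - (r : ℝ) * h * cm F (r - 1)) 0 := by
    have htot := hB.add hD
    rw [hg]
    refine htot.congr_deriv (Eq.symm ?_)
    simp only [id_eq]
    rw [hsum0 0 rfl]
    ring
  rw [hasDerivAt_iff_tendsto_slope] at hgderiv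
  have key := hgderiv.mono_left (nhdsWithin_mono 0 (fun x hx => ne_of_gt hx))
  refine key.congr' ?_
  filter_upwards [Ioo_mem_nhdsGT_of_mem (Set.left_mem_Ico.mpr zero_lt_one)] with ε hε
  rw [slope_def_field, hg0, heq ε hε, sub_zero]
end

section
/- For T(F) = μ_r(F), the cube of the influence function integrates to [1³]_T = μ_{3r} − 3r μ_{2r+1} μ_{r−1} − 3 μ_{2r} μ_r + 3r² μ_{r+2} μ_{r−1}² + 6r μ_{r+1} μ_r μ_{r−1} + 2 μ_r³ − 3r² μ_r μ_{r−1}² μ₂ − r³ μ_{r−1}³ μ₃. -/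
open MeasureTheory

/-- For `T(F) = μ_r(F)`, the cube of the influence function integrates to
`[1³]_T = μ_{3r} − 3r μ_{2r+1} μ_{r−1} − 3 μ_{2r} μ_r + 3r² μ_{r+2} μ_{r−1}²
  + 6r μ_{r+1} μ_r μ_{r−1} + 2 μ_r³ − 3r² μ_r μ_{r−1}² μ₂ − r³ μ_{r−1}³ μ₃`. -/
theorem bracket_one_cubed_of_central_moment
    (F : MeasureTheory.Measure ℝ) [IsProbabilityMeasure F]
    (r : ℕ) (hr : 1 ≤ r)
    (hint : ∀ k ≤ 3 * r, Integrable (fun x : ℝ => x ^ k) F) :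
    ∫ x, ((x - m1 F) ^ r - cm F r - r * (x - m1 F) * cm F (r - 1)) ^ 3 ∂F =
      cm F (3 * r) - 3 * r * cm F (2 * r + 1) * cm F (r - 1) - 3 * cm F (2 * r) * cm F r
        + 3 * r ^ 2 * cm F (r + 2) * cm F (r - 1) ^ 2
        + 6 * r * cm F (r + 1) * cm F r * cm F (r - 1)
        + 2 * cm F r ^ 3 - 3 * r ^ 2 * cm F r * cm F (r - 1) ^ 2 * cm F 2
        - r ^ 3 * cm F (r - 1) ^ 3 * cm F 3 := by
  have h3r : 1 ≤ 3 * r := by omega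
  set μ := m1 F with hμ
  have hI : ∀ k, k ≤ 3 * r → Integrable (fun x : ℝ => (x - μ) ^ k) F := by
    intro k hk
    have hrepr : (fun x : ℝ => (x - μ) ^ k)
        = fun x => ∑ j ∈ Finset.range (k + 1), x ^ j * ((-μ) ^ (k - j) * (k.choose j)) := by
      funext x
      rw [sub_eq_add_neg, add_pow]
      simp [mul_assoc]
    rw [hrepr]
    exact integrable_finset_sum _ fun j hj =>
      (hint j (le_trans (Nat.lt_succ_iff.mp (Finset.mem_range.mp hj)) hk)).mul_const _
  have hcm : ∀ k, cm F k = ∫ x, (x - μ) ^ k ∂F := fun k => rfl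
  have hcm1 : cm F 1 = 0 := by
    rw [hcm]
    have hx : Integrable (fun x : ℝ => x) F := by simpa using hint 1 h3r
    simp only [pow_one]
    rw [integral_sub hx (integrable_const μ), integral_const]
    simp [hμ, m1]
  set a := cm F r with ha
  set b := cm F (r - 1) with hb
  set c : Fin 10 → ℝ := ![1, -(3 * r * b), -(3 * a), 3 * r ^ 2 * b ^ 2, 6 * r * a * b,
    3 * a ^ 2, -(3 * r * a ^ 2 * b), -(3 * r ^ 2 * a * b ^ 2), -(r ^ 3 * b ^ 3), -(a ^ 3)]
    with hc
  set e : Fin 10 → ℕ := ![3 * r, 2 * r + 1, 2 * r, r + 2, r + 1, r, 1, 2, 3, 0] with he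
  have hee : ∀ i : Fin 10, e i ≤ 3 * r := by
    simp only [he, Fin.forall_fin_succ, Matrix.cons_val_zero, Matrix.cons_val_succ,
      IsEmpty.forall_iff, and_true]
    omega
  have key : ∀ x : ℝ, ((x - μ) ^ r - a - r * (x - μ) * b) ^ 3
      = ∑ i : Fin 10, c i * (x - μ) ^ (e i) := by
    intro x
    have e1 : (x - μ) ^ (3 * r) = ((x - μ) ^ r) ^ 3 := pow_mul' _ 3 r
    have e2 : (x - μ) ^ (2 * r + 1) = ((x - μ) ^ r) ^ 2 * (x - μ) := by
      rw [pow_add, pow_mul', pow_one]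
    have e3 : (x - μ) ^ (2 * r) = ((x - μ) ^ r) ^ 2 := pow_mul' _ 2 r
    have e4 : (x - μ) ^ (r + 2) = (x - μ) ^ r * (x - μ) ^ 2 := pow_add _ r 2
    have e5 : (x - μ) ^ (r + 1) = (x - μ) ^ r * (x - μ) := pow_succ _ r
    simp only [hc, he, Fin.sum_univ_succ, Fin.sum_univ_zero, Matrix.cons_val_zero,
      Matrix.cons_val_succ]
    rw [e1, e2, e3, e4, e5]
    ring
  calc ∫ x, ((x - μ) ^ r - a - r * (x - μ) * b) ^ 3 ∂F
      = ∫ x, ∑ i : Fin 10, c i * (x - μ) ^ (e i) ∂F := by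
        exact integral_congr_ae (Filter.Eventually.of_forall key)
    _ = ∑ i : Fin 10, c i * cm F (e i) := by
        rw [integral_finset_sum _ fun i _ => (hI (e i) (hee i)).const_mul (c i)]
        exact Finset.sum_congr rfl fun i _ => by rw [integral_const_mul, hcm]
    _ = _ := by
        simp only [hc, he, Fin.sum_univ_succ, Fin.sum_univ_zero, Matrix.cons_val_zero,
          Matrix.cons_val_succ]
        rw [hcm1, ← ha]
        have h0 : cm F 0 = 1 := by
          rw [hcm]; simp
        rw [h0]
        ring
end
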